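/- Let H : E → ℝ be smooth and let ζ₁, ζ₂ be smooth vector fields on E with L_{ζ₁} α_H = 0, L_{ζ₂} α_H = 0, and [ζ₁, ζ₂] = 0. For k = 1, 2 let τ_k : E → ℝ be the first (time) component of ζ_k and set ζ̃_k = ζ_k − τ_k · Z_H. Then [Z_H, ζ̃₁] = 0, [Z_H, ζ̃₂] = 0, and [ζ̃₁, ζ̃₂] = 0 everywhere on E. -/

import Mathlib

noncomputable section
open scoped ContDiff

/-- The extended phase space `E = ℝ × ℝⁿ × ℝⁿ`, with points `x = (t, q, p)`. -/
abbrev EE (n : ℕ) : Type := ℝ × (Fin n → ℝ) × (Fin n → ℝ)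

/-- The Poincaré–Cartan 1-form `α_H = p dq − H dt`:
`α_H(x)(τ̂, ξ̂, η̂) = ∑ i, pᵢ ξ̂ᵢ − H(x) τ̂`. -/
def pcForm {n : ℕ} (H : EE n → ℝ) (x : EE n) : EE n →L[ℝ] ℝ :=
  (∑ i, x.2.2 i • ((ContinuousLinearMap.proj i).comp
      ((ContinuousLinearMap.fst ℝ (Fin n → ℝ) (Fin n → ℝ)).comp
        (ContinuousLinearMap.snd ℝ ℝ ((Fin n → ℝ) × (Fin n → ℝ))))))
    - H x • ContinuousLinearMap.fst ℝ ℝ ((Fin n → ℝ) × (Fin n → ℝ))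

/-- The vector field `Z_H(x) = (1, ∂H/∂p(x), −∂H/∂q(x))` of Hamilton's equations. -/
def ZH {n : ℕ} (H : EE n → ℝ) (x : EE n) : EE n :=
  (1, fun i => fderiv ℝ H x (0, 0, Pi.single i 1),
      fun i => - fderiv ℝ H x (0, Pi.single i 1, 0))

/-- The Lie derivative of a 1-form `α` along a vector field `ζ`:
`(L_ζ α)(x)(v) = (Dα(x)(ζ(x)))(v) + α(x)(Dζ(x)(v))`. -/
def lieDeriv {n : ℕ} (ζ : EE n → EE n) (α : EE n → (EE n →L[ℝ] ℝ)) (x : EE n) :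
    EE n →L[ℝ] ℝ :=
  fderiv ℝ α x (ζ x) + (α x).comp (fderiv ℝ ζ x)

/-- The exterior derivative of a 1-form:
`dα(x)(u,v) = (Dα(x)u)(v) − (Dα(x)v)(u)`. -/
def extDerivEE {n : ℕ} (α : EE n → (EE n →L[ℝ] ℝ)) (x u v : EE n) : ℝ :=
  fderiv ℝ α x u v - fderiv ℝ α x v u

/-- The Lie bracket of vector fields: `[X,Y](x) = DY(x)(X(x)) − DX(x)(Y(x))`. -/
def vbracket {n : ℕ} (X Y : EE n → EE n) (x : EE n) : EE n :=
  fderiv ℝ Y x (X x) - fderiv ℝ X x (Y x)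

namespace NoetherAux
variable {n : ℕ}

/-- CLM picking `v.2.1 i`. -/
def Lq (n : ℕ) (i : Fin n) : EE n →L[ℝ] ℝ :=
  (ContinuousLinearMap.proj i).comp
      ((ContinuousLinearMap.fst ℝ (Fin n → ℝ) (Fin n → ℝ)).comp
        (ContinuousLinearMap.snd ℝ ℝ ((Fin n → ℝ) × (Fin n → ℝ))))

/-- CLM picking `v.2.2 i`. -/
def Lp (n : ℕ) (i : Fin n) : EE n →L[ℝ] ℝ :=
  (ContinuousLinearMap.proj i).comp
      ((ContinuousLinearMap.snd ℝ (Fin n → ℝ) (Fin n → ℝ)).comp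
        (ContinuousLinearMap.snd ℝ ℝ ((Fin n → ℝ) × (Fin n → ℝ))))

def dotv {n : ℕ} (a b : Fin n → ℝ) : ℝ := ∑ i, a i * b i

/-- The coordinate expression of the exterior derivative `dα_H` (the symplectic form). -/
def omg (H : EE n → ℝ) (y a b : EE n) : ℝ :=
  dotv a.2.2 b.2.1 - dotv b.2.2 a.2.1 - fderiv ℝ H y a * b.1 + fderiv ℝ H y b * a.1

lemma dotv_sub_left (a a' b : Fin n → ℝ) : dotv (a - a') b = dotv a b - dotv a' b := by
  simp [dotv, sub_mul, Finset.sum_sub_distrib]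

lemma dotv_sub_right (a b b' : Fin n → ℝ) : dotv a (b - b') = dotv a b - dotv a b' := by
  simp [dotv, mul_sub, Finset.sum_sub_distrib]

lemma dotv_single (a : Fin n → ℝ) (j : Fin n) : dotv a (Pi.single j 1) = a j := by
  simp [dotv, Pi.single_apply]

lemma dotv_single' (a : Fin n → ℝ) (j : Fin n) : dotv (Pi.single j 1) a = a j := by
  simp [dotv, Pi.single_apply]

lemma omg_antisymm (H : EE n → ℝ) (y a b : EE n) : omg H y a b = - omg H y b a := by
  simp only [omg]; ring

lemma omg_sub_left (H : EE n → ℝ) (y : EE n) (a a' b : EE n) :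
    omg H y (a - a') b = omg H y a b - omg H y a' b := by
  simp only [omg]
  have h1 : (a - a').2.2 = a.2.2 - a'.2.2 := rfl
  have h2 : (a - a').2.1 = a.2.1 - a'.2.1 := rfl
  have h3 : (a - a').1 = a.1 - a'.1 := rfl
  rw [h1, h2, h3, dotv_sub_left, dotv_sub_right, map_sub]
  ring

lemma single_eq_smul (q : Fin n → ℝ) (i : Fin n) :
    Pi.single i (q i) = q i • (Pi.single i 1 : Fin n → ℝ) := by
  rw [← Pi.single_smul, smul_eq_mul, mul_one]

lemma clm_pi_decomp (M : (Fin n → ℝ) →L[ℝ] ℝ) (q : Fin n → ℝ) :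
    M q = ∑ i, q i * M (Pi.single i 1) := by
  conv_lhs => rw [← Finset.univ_sum_single q]
  rw [map_sum]
  exact Finset.sum_congr rfl fun i _ => by rw [single_eq_smul, map_smul, smul_eq_mul]

/-- Decomposition of a linear functional on `EE n` into coordinates. -/
lemma clm_decomp (L : EE n →L[ℝ] ℝ) (w : EE n) :
    L w = w.1 * L (1,0,0) + (∑ i, w.2.1 i * L (0, Pi.single i 1, 0))
      + ∑ i, w.2.2 i * L (0, 0, Pi.single i 1) := by
  have hw : w = (w.1,(0:Fin n → ℝ),(0:Fin n → ℝ)) + (0,w.2.1,0) + (0,0,w.2.2) := by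
    refine Prod.ext ?_ (Prod.ext ?_ ?_) <;> simp
  conv_lhs => rw [hw, map_add, map_add]
  congr 1
  · congr 1
    · have h1 : ((w.1,(0:Fin n → ℝ),(0:Fin n → ℝ)) : EE n) = w.1 • ((1,0,0) : EE n) := by
        refine Prod.ext ?_ (Prod.ext ?_ ?_) <;> simp
      rw [h1, map_smul, smul_eq_mul]
    · set M : (Fin n → ℝ) →L[ℝ] ℝ := L.comp
        ((ContinuousLinearMap.inr ℝ ℝ ((Fin n → ℝ) × (Fin n → ℝ))).comp
          (ContinuousLinearMap.inl ℝ (Fin n → ℝ) (Fin n → ℝ)))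
      have h0 : ∀ q, L ((0,q,0) : EE n) = M q := fun q => rfl
      rw [h0, clm_pi_decomp]
      exact Finset.sum_congr rfl fun i _ => by rw [h0]
  · set M : (Fin n → ℝ) →L[ℝ] ℝ := L.comp
      ((ContinuousLinearMap.inr ℝ ℝ ((Fin n → ℝ) × (Fin n → ℝ))).comp
        (ContinuousLinearMap.inr ℝ (Fin n → ℝ) (Fin n → ℝ)))
    have h0 : ∀ p, L ((0,0,p) : EE n) = M p := fun p => rfl
    rw [h0, clm_pi_decomp]
    exact Finset.sum_congr rfl fun i _ => by rw [h0]

/-- `Z_H` lies in the kernel of `dα_H`. -/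
lemma omg_ZH (H : EE n → ℝ) (x v : EE n) : omg H x (ZH H x) v = 0 := by
  set L := fderiv ℝ H x with hL
  have hZ : ZH H x = ((1, fun i => L (0, 0, Pi.single i 1),
      fun i => - L (0, Pi.single i 1, 0)) : EE n) := rfl
  simp only [omg, dotv, hZ, mul_one]
  rw [clm_decomp L v, clm_decomp L ((1, fun i => L (0, 0, Pi.single i 1),
      fun i => - L (0, Pi.single i 1, 0)) : EE n)]
  simp only
  have e1 : ∑ i, (- L ((0, Pi.single i 1, 0) : EE n)) * v.2.1 i
      = - ∑ i, v.2.1 i * L ((0, Pi.single i 1, 0) : EE n) := by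
    rw [← Finset.sum_neg_distrib]; exact Finset.sum_congr rfl fun i _ => by ring
  have e3 : ∑ i, (- L ((0, Pi.single i 1, 0) : EE n)) * L ((0, 0, Pi.single i 1) : EE n)
      = - ∑ i, L ((0, 0, Pi.single i 1) : EE n) * L ((0, Pi.single i 1, 0) : EE n) := by
    rw [← Finset.sum_neg_distrib]; exact Finset.sum_congr rfl fun i _ => by ring
  rw [e1, e3]
  ring

/-- The kernel of `dα_H` is spanned by `Z_H`. -/
lemma omg_kernel (H : EE n → ℝ) (x u : EE n) (h : ∀ v, omg H x u v = 0) :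
    u = u.1 • ZH H x := by
  refine Prod.ext ?_ (Prod.ext ?_ ?_)
  · simp [ZH]
  · funext j
    have h1 := h (0, 0, Pi.single j 1)
    simp only [omg, dotv_single, dotv_single'] at h1
    simp only [dotv] at h1
    simp at h1
    have : u.2.1 j = u.1 * fderiv ℝ H x ((0, 0, Pi.single j 1) : EE n) := by linarith
    simp [ZH, this, mul_comm]
  · funext j
    have h1 := h (0, Pi.single j 1, 0)
    simp only [omg, dotv_single, dotv_single'] at h1
    simp only [dotv] at h1
    simp at h1
    have : u.2.2 j = - (u.1 * fderiv ℝ H x ((0, Pi.single j 1, 0) : EE n)) := by linarith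
    simp [ZH, this, mul_comm]

lemma contDiff_ZH (H : EE n → ℝ) (hH : ContDiff ℝ ∞ H) : ContDiff ℝ ∞ (ZH H) := by
  have hFd : ContDiff ℝ ∞ (fderiv ℝ H) := hH.fderiv_right (by norm_num)
  refine contDiff_const.prodMk (ContDiff.prodMk ?_ ?_)
  · exact contDiff_pi.2 fun i => hFd.clm_apply contDiff_const
  · exact contDiff_pi.2 fun i => (hFd.clm_apply contDiff_const).neg

lemma fderiv_ZH_fst {H : EE n → ℝ} (hH : ContDiff ℝ ∞ H) (x a : EE n) :
    (fderiv ℝ (ZH H) x a).1 = 0 := by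
  have hZd : Differentiable ℝ (ZH H) := (contDiff_ZH H hH).differentiable (by norm_num)
  have h1 : HasFDerivAt (fun y => (ZH H y).1)
      ((ContinuousLinearMap.fst ℝ ℝ ((Fin n → ℝ) × (Fin n → ℝ))).comp
        (fderiv ℝ (ZH H) x)) x := (hZd x).hasFDerivAt.fst
  have h2 : HasFDerivAt (fun y => (ZH H y).1) (0 : EE n →L[ℝ] ℝ) x := by
    have he : (fun y : EE n => (ZH H y).1) = fun _ : EE n => (1:ℝ) := rfl
    rw [he]; exact hasFDerivAt_const 1 x
  have h3 := h1.unique h2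
  calc (fderiv ℝ (ZH H) x a).1
      = ((ContinuousLinearMap.fst ℝ ℝ ((Fin n → ℝ) × (Fin n → ℝ))).comp
          (fderiv ℝ (ZH H) x)) a := rfl
    _ = 0 := by rw [h3]; rfl

lemma hasFDerivAt_pcForm {H : EE n → ℝ} {x : EE n} (hH : DifferentiableAt ℝ H x) :
    HasFDerivAt (pcForm H)
      ((∑ i, (Lp n i).smulRight (Lq n i)) -
        (fderiv ℝ H x).smulRight (ContinuousLinearMap.fst ℝ ℝ ((Fin n → ℝ) × (Fin n → ℝ)))) x := by
  have h1 : HasFDerivAt (fun y : EE n => ∑ i, y.2.2 i • Lq n i)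
      (∑ i, (Lp n i).smulRight (Lq n i)) x :=
    HasFDerivAt.fun_sum fun i _ => ((Lp n i).hasFDerivAt).smul_const (Lq n i)
  exact (h1.sub (hH.hasFDerivAt.smul_const (ContinuousLinearMap.fst ℝ ℝ ((Fin n → ℝ) × (Fin n → ℝ)))))

lemma fderiv_pcForm_apply {H : EE n → ℝ} {x : EE n} (hH : DifferentiableAt ℝ H x)
    (u v : EE n) :
    fderiv ℝ (pcForm H) x u v = dotv u.2.2 v.2.1 - fderiv ℝ H x u * v.1 := by
  rw [(hasFDerivAt_pcForm hH).fderiv]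
  simp [dotv, Lp, Lq, ContinuousLinearMap.sum_apply, smul_eq_mul]

lemma contDiff_pcForm {H : EE n → ℝ} (hH : ContDiff ℝ ∞ H) : ContDiff ℝ ∞ (pcForm H) := by
  apply ContDiff.sub
  · exact ContDiff.sum fun i _ => ((Lp n i).contDiff).smul contDiff_const
  · exact hH.smul contDiff_const

/-- Derivative of `y ↦ dα_H(y)(X y, v)` for a vector field `X` and fixed `v`. -/
lemma fderiv_omg (H : EE n → ℝ) (hH : ContDiff ℝ ∞ H) {X : EE n → EE n}
    (hX : Differentiable ℝ X) (v x u : EE n) :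
    fderiv ℝ (fun y => omg H y (X y) v) x u
      = omg H x (fderiv ℝ X x u) v
        - fderiv ℝ (fderiv ℝ H) x u (X x) * v.1
        + fderiv ℝ (fderiv ℝ H) x u v * (X x).1 := by
  set DX := fderiv ℝ X x with hDX
  set B := fderiv ℝ (fderiv ℝ H) x with hB
  have hx' : HasFDerivAt X DX x := (hX x).hasFDerivAt
  have hFd : ContDiff ℝ ∞ (fderiv ℝ H) := hH.fderiv_right (by norm_num)
  have hH' : HasFDerivAt (fderiv ℝ H) B x := (hFd.differentiable (by norm_num) x).hasFDerivAt
  have h1 : HasFDerivAt (fun y => ∑ i, (X y).2.2 i * v.2.1 i)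
      (∑ i, v.2.1 i • ((Lp n i).comp DX)) x :=
    HasFDerivAt.fun_sum fun i _ => ((Lp n i).hasFDerivAt.comp x hx').mul_const (v.2.1 i)
  have h2 : HasFDerivAt (fun y => ∑ i, v.2.2 i * (X y).2.1 i)
      (∑ i, v.2.2 i • ((Lq n i).comp DX)) x :=
    HasFDerivAt.fun_sum fun i _ => ((Lq n i).hasFDerivAt.comp x hx').const_mul (v.2.2 i)
  have h3 : HasFDerivAt (fun y => fderiv ℝ H y (X y) * v.1)
      (v.1 • ((fderiv ℝ H x).comp DX + B.flip (X x))) x :=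
    (hH'.clm_apply hx').mul_const v.1
  have h4c : HasFDerivAt (fun y => fderiv ℝ H y v)
      ((fderiv ℝ H x).comp (0 : EE n →L[ℝ] EE n) + B.flip v) x :=
    hH'.clm_apply (hasFDerivAt_const v x)
  have h4f : HasFDerivAt (fun y => (X y).1)
      ((ContinuousLinearMap.fst ℝ ℝ ((Fin n → ℝ) × (Fin n → ℝ))).comp DX) x := hx'.fst
  have h4 := h4c.mul h4f
  have h : HasFDerivAt (fun y => omg H y (X y) v)
      ((((∑ i, v.2.1 i • ((Lp n i).comp DX)) - (∑ i, v.2.2 i • ((Lq n i).comp DX)))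
        - (v.1 • ((fderiv ℝ H x).comp DX + B.flip (X x))))
        + ((fderiv ℝ H x v) •
            ((ContinuousLinearMap.fst ℝ ℝ ((Fin n → ℝ) × (Fin n → ℝ))).comp DX)
            + (X x).1 • ((fderiv ℝ H x).comp (0 : EE n →L[ℝ] EE n) + B.flip v))) x :=
    ((h1.sub h2).sub h3).add h4
  rw [h.fderiv]
  simp only [ContinuousLinearMap.add_apply, ContinuousLinearMap.sub_apply,
    ContinuousLinearMap.smul_apply, ContinuousLinearMap.sum_apply,
    ContinuousLinearMap.comp_apply, ContinuousLinearMap.flip_apply,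
    ContinuousLinearMap.zero_apply, map_zero, smul_eq_mul, omg, dotv]
  have e1 : ∑ i, v.2.1 i * (Lp n i) (DX u) = ∑ i, (DX u).2.2 i * v.2.1 i :=
    Finset.sum_congr rfl fun i _ => by simp [Lp]; ring
  have e2 : ∑ i, v.2.2 i * (Lq n i) (DX u) = ∑ i, v.2.2 i * (DX u).2.1 i :=
    Finset.sum_congr rfl fun i _ => by simp [Lq]
  rw [e1, e2]
  have e3 : (ContinuousLinearMap.fst ℝ ℝ ((Fin n → ℝ) × (Fin n → ℝ))) (DX u) = (DX u).1 := rfl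
  rw [e3]
  ring

/-- Cartan's magic formula consequence: `ι_ζ dα_H = -d(α_H(ζ))` for a Noether symmetry. -/
lemma noether {H : EE n → ℝ} (hH : ContDiff ℝ ∞ H) {ζ : EE n → EE n}
    (hζ : ContDiff ℝ ∞ ζ) (hsym : ∀ x, lieDeriv ζ (pcForm H) x = 0) (x v : EE n) :
    omg H x (ζ x) v = - fderiv ℝ (fun y => pcForm H y (ζ y)) x v := by
  have hHd : DifferentiableAt ℝ H x := (hH.differentiable (by norm_num)).differentiableAt
  have hζ' : HasFDerivAt ζ (fderiv ℝ ζ x) x :=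
    ((hζ.differentiable (by norm_num)) x).hasFDerivAt
  have hpc := hasFDerivAt_pcForm hHd
  have hF := (hpc.clm_apply hζ').fderiv
  have hs := congrFun (congrArg (fun (L : EE n →L[ℝ] ℝ) => (L : EE n → ℝ)) (hsym x)) v
  simp only [lieDeriv, ContinuousLinearMap.add_apply, ContinuousLinearMap.comp_apply,
    ContinuousLinearMap.zero_apply] at hs
  have homg : omg H x (ζ x) v
      = fderiv ℝ (pcForm H) x (ζ x) v - fderiv ℝ (pcForm H) x v (ζ x) := by
    rw [fderiv_pcForm_apply hHd, fderiv_pcForm_apply hHd]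
    simp only [omg]; ring
  rw [homg, hF]
  simp only [ContinuousLinearMap.add_apply, ContinuousLinearMap.comp_apply,
    ContinuousLinearMap.flip_apply]
  rw [← hpc.fderiv]
  linarith

/-- Symmetry (closedness of `ι_ζ dα_H + dF = 0` data): the bilinear form
`(u,v) ↦ D_x[dα_H(ζ, v)](u)` is symmetric. -/
lemma omg_symm {H : EE n → ℝ} (hH : ContDiff ℝ ∞ H) {ζ : EE n → EE n}
    (hζ : ContDiff ℝ ∞ ζ) (hsym : ∀ x, lieDeriv ζ (pcForm H) x = 0) (x u v : EE n) :
    fderiv ℝ (fun y => omg H y (ζ y) v) x u = fderiv ℝ (fun y => omg H y (ζ y) u) x v := by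
  set F := fun y => pcForm H y (ζ y) with hFdef
  have hFC : ContDiff ℝ ∞ F := (contDiff_pcForm hH).clm_apply hζ
  have hFd' : ContDiff ℝ ∞ (fderiv ℝ F) := hFC.fderiv_right (by norm_num)
  have hF2 : HasFDerivAt (fderiv ℝ F) (fderiv ℝ (fderiv ℝ F) x) x :=
    ((hFd'.differentiable (by norm_num)) x).hasFDerivAt
  have key : ∀ w u', fderiv ℝ (fun y => omg H y (ζ y) w) x u'
      = - fderiv ℝ (fderiv ℝ F) x u' w := by
    intro w u'
    have hfun : (fun y => omg H y (ζ y) w) = fun y => -(fderiv ℝ F y w) :=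
      funext fun y => noether hH hζ hsym y w
    rw [hfun]
    have h := (hF2.clm_apply (hasFDerivAt_const w x)).fun_neg.fderiv
    rw [h]; simp
  rw [key, key]
  have hsymm : IsSymmSndFDerivAt ℝ F x := (hFC.contDiffAt).isSymmSndFDerivAt (by simp; exact WithTop.coe_le_coe.2 le_top)
  rw [hsymm u v]

/-- Key lemma: for a Noether symmetry `ζ`, `[Z_H, ζ] = (Dτ(Z_H)) • Z_H` where `τ = ζ₁`. -/
lemma key_bracket {H : EE n → ℝ} (hH : ContDiff ℝ ∞ H) {ζ : EE n → EE n}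
    (hζ : ContDiff ℝ ∞ ζ) (hsym : ∀ x, lieDeriv ζ (pcForm H) x = 0) (x : EE n) :
    fderiv ℝ ζ x (ZH H x) - fderiv ℝ (ZH H) x (ζ x)
      = (fderiv ℝ ζ x (ZH H x)).1 • ZH H x := by
  have hζd : Differentiable ℝ ζ := hζ.differentiable (by norm_num)
  have hZd : Differentiable ℝ (ZH H) := (contDiff_ZH H hH).differentiable (by norm_num)
  set B := fderiv ℝ (fderiv ℝ H) x with hB
  have hBsymm : IsSymmSndFDerivAt ℝ H x := hH.contDiffAt.isSymmSndFDerivAt (by simp; exact WithTop.coe_le_coe.2 le_top)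
  have hker : ∀ v, omg H x (fderiv ℝ ζ x (ZH H x) - fderiv ℝ (ZH H) x (ζ x)) v = 0 := by
    intro v
    rw [omg_sub_left]
    have hA : omg H x (fderiv ℝ (ZH H) x (ζ x)) v
        = B (ζ x) (ZH H x) * v.1 - B (ζ x) v := by
      have h0 : (fun y => omg H y (ZH H y) v) = fun _ : EE n => (0:ℝ) :=
        funext fun y => omg_ZH H y v
      have hd := fderiv_omg H hH hZd v x (ζ x)
      rw [h0] at hd
      simp only [fderiv_fun_const, Pi.zero_apply, ContinuousLinearMap.zero_apply] at hd
      have h1 : (ZH H x).1 = 1 := rfl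
      rw [h1, mul_one] at hd
      linarith
    have hBB : omg H x (fderiv ℝ ζ x (ZH H x)) v
        = B (ZH H x) (ζ x) * v.1 - B (ZH H x) v * (ζ x).1
          - B v (ζ x) + B v (ZH H x) * (ζ x).1 := by
      have hs := omg_symm hH hζ hsym x (ZH H x) v
      rw [fderiv_omg H hH hζd v x (ZH H x), fderiv_omg H hH hζd (ZH H x) x v] at hs
      have hz : omg H x (fderiv ℝ ζ x v) (ZH H x) = 0 := by
        rw [omg_antisymm, omg_ZH]; ring
      have h1 : (ZH H x).1 = 1 := rfl
      rw [hz, h1, mul_one] at hs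
      linarith
    rw [hA, hBB]
    have s1 := hBsymm (ZH H x) (ζ x)
    have s2 := hBsymm (ZH H x) v
    have s3 := hBsymm (ζ x) v
    rw [← hB] at s1 s2 s3
    rw [s1, s2, s3]
    ring
  have hk := omg_kernel H x _ hker
  have hfst : (fderiv ℝ ζ x (ZH H x) - fderiv ℝ (ZH H) x (ζ x)).1
      = (fderiv ℝ ζ x (ZH H x)).1 := by
    have : (fderiv ℝ ζ x (ZH H x) - fderiv ℝ (ZH H) x (ζ x)).1
        = (fderiv ℝ ζ x (ZH H x)).1 - (fderiv ℝ (ZH H) x (ζ x)).1 := rfl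
    rw [this, fderiv_ZH_fst hH, sub_zero]
  rw [hk, hfst]

/-- Derivative of the modified vector field `ζ̃ = ζ - τ • Z_H`. -/
lemma fderiv_modified {H : EE n → ℝ} (hH : ContDiff ℝ ∞ H) {ζ : EE n → EE n}
    (hζ : ContDiff ℝ ∞ ζ) (x u : EE n) :
    fderiv ℝ (fun y => ζ y - (ζ y).1 • ZH H y) x u
      = fderiv ℝ ζ x u - (fderiv ℝ ζ x u).1 • ZH H x - (ζ x).1 • fderiv ℝ (ZH H) x u := by
  have hζx : HasFDerivAt ζ (fderiv ℝ ζ x) x :=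
    ((hζ.differentiable (by norm_num)) x).hasFDerivAt
  have hZx : HasFDerivAt (ZH H) (fderiv ℝ (ZH H) x) x :=
    (((contDiff_ZH H hH).differentiable (by norm_num)) x).hasFDerivAt
  have h := (hζx.fun_sub ((hζx.fst).fun_smul hZx)).fderiv
  rw [h]
  simp only [ContinuousLinearMap.sub_apply, ContinuousLinearMap.add_apply,
    ContinuousLinearMap.smul_apply, ContinuousLinearMap.smulRight_apply,
    ContinuousLinearMap.comp_apply, ContinuousLinearMap.coe_fst']
  abel

/-- The commutator `[Z_H, ζ̃] = 0` for a Noether symmetry `ζ`. -/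
lemma bracket_ZH_modified {H : EE n → ℝ} (hH : ContDiff ℝ ∞ H) {ζ : EE n → EE n}
    (hζ : ContDiff ℝ ∞ ζ) (hsym : ∀ x, lieDeriv ζ (pcForm H) x = 0) (x : EE n) :
    vbracket (ZH H) (fun y => ζ y - (ζ y).1 • ZH H y) x = 0 := by
  have hk := key_bracket hH hζ hsym x
  rw [vbracket]
  rw [fderiv_modified hH hζ x (ZH H x)]
  rw [map_sub, map_smul]
  have hk2 : fderiv ℝ (ZH H) x (ζ x)
      = fderiv ℝ ζ x (ZH H x) - (fderiv ℝ ζ x (ZH H x)).1 • ZH H x := by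
    rw [← hk]; abel
  rw [hk2]
  abel

end NoetherAux

open NoetherAux in
/-- if `ζ₁, ζ₂` are commuting Noether symmetries (`L_{ζₖ} α_H = 0`,
`[ζ₁,ζ₂] = 0`) with time components `τₖ = (ζₖ)₁`, then the modified fields
`ζ̃ₖ = ζₖ − τₖ • Z_H` satisfy `[Z_H, ζ̃₁] = [Z_H, ζ̃₂] = [ζ̃₁, ζ̃₂] = 0` on `E`. -/
theorem modified_symmetries_commute {n : ℕ} (hn : 1 ≤ n)
    (H : EE n → ℝ) (hH : ContDiff ℝ ∞ H)
    (ζ₁ ζ₂ : EE n → EE n) (hζ₁ : ContDiff ℝ ∞ ζ₁) (hζ₂ : ContDiff ℝ ∞ ζ₂)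
    (hsym₁ : ∀ x, lieDeriv ζ₁ (pcForm H) x = 0)
    (hsym₂ : ∀ x, lieDeriv ζ₂ (pcForm H) x = 0)
    (hcomm : ∀ x, vbracket ζ₁ ζ₂ x = 0) :
    (∀ x, vbracket (ZH H) (fun y => ζ₁ y - (ζ₁ y).1 • ZH H y) x = 0) ∧
    (∀ x, vbracket (ZH H) (fun y => ζ₂ y - (ζ₂ y).1 • ZH H y) x = 0) ∧
    (∀ x, vbracket (fun y => ζ₁ y - (ζ₁ y).1 • ZH H y)
        (fun y => ζ₂ y - (ζ₂ y).1 • ZH H y) x = 0) := by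
  refine ⟨fun x => bracket_ZH_modified hH hζ₁ hsym₁ x,
    fun x => bracket_ZH_modified hH hζ₂ hsym₂ x, fun x => ?_⟩
  rw [vbracket]
  rw [fderiv_modified hH hζ₂ x (ζ₁ x - (ζ₁ x).1 • ZH H x),
      fderiv_modified hH hζ₁ x (ζ₂ x - (ζ₂ x).1 • ZH H x)]
  set Z := ZH H x with hZ
  set D1 := fderiv ℝ ζ₁ x with hD1
  set D2 := fderiv ℝ ζ₂ x with hD2
  set DZ := fderiv ℝ (ZH H) x with hDZ
  have k1 : D1 Z - DZ (ζ₁ x) = (D1 Z).1 • Z := key_bracket hH hζ₁ hsym₁ x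
  have k2 : D2 Z - DZ (ζ₂ x) = (D2 Z).1 • Z := key_bracket hH hζ₂ hsym₂ x
  have hc : D2 (ζ₁ x) - D1 (ζ₂ x) = 0 := hcomm x
  have hc' : D2 (ζ₁ x) = D1 (ζ₂ x) := by rwa [sub_eq_zero] at hc
  have hc1 : (D2 (ζ₁ x)).1 = (D1 (ζ₂ x)).1 := by rw [hc']
  have hZfst : ∀ a, (DZ a).1 = 0 := fun a => fderiv_ZH_fst hH x a
  -- first components of k1, k2
  have k1' : DZ (ζ₁ x) = D1 Z - (D1 Z).1 • Z := by rw [← k1]; abel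
  have k2' : DZ (ζ₂ x) = D2 Z - (D2 Z).1 • Z := by rw [← k2]; abel
  simp only [map_sub, map_smul]
  simp only [Prod.fst_sub, Prod.smul_fst, smul_eq_mul]
  rw [k1', k2', hc']
  module
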